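/- Let α ∈ (2/3, 1). Then for every integer i ≥ 1, Σ_{k≥0} p_{i,k} = p_i, where p_{i,k} = 2·φ_{k,i+1}·α^{i+2k}·((1−α)/2)^{i+k} and p_i = (2/4^i)·((2i−2)!/((i−1)!·(i+1)!))·(2/α − 2)^i·((3α−2)i + 1); in particular the series on the left converges. -/

import Mathlib

set_option maxHeartbeats 2000000

/-- `phi n m` is the number of rooted triangulations without self-loops of a disc with
`m` boundary vertices and `n` internal vertices (as a real number). -/
noncomputable def phi (n m : ℕ) : ℝ :=
  ((2:ℝ) ^ (n + 1) * (Nat.factorial (2 * (m - 2) + 1) : ℝ) *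
      (Nat.factorial (2 * (m - 2) + 3 * n) : ℝ)) /
    (((Nat.factorial (m - 2) : ℝ)) ^ 2 * (Nat.factorial n : ℝ) *
      (Nat.factorial (2 * (m - 2) + 2 * n + 2) : ℝ))


open Finset Filter Topology

/-- Fuss–Catalan first-passage numbers (as reals):
`Fc x k = x * (x+3k-1)! / (k! * (x+2k)!)` for `x ≥ 1`, with `Fc 0 k = δ_{k,0}`. -/
noncomputable def Fc : ℕ → ℕ → ℝ
  | 0, 0 => 1
  | 0, _ + 1 => 0
  | s + 1, k => ((s : ℝ) + 1) * (Nat.factorial (s + 3 * k)) /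
      (Nat.factorial k * Nat.factorial (s + 2 * k + 1))

lemma Fc_succ (s k : ℕ) : Fc (s + 1) k = ((s : ℝ) + 1) * (Nat.factorial (s + 3 * k)) /
    (Nat.factorial k * Nat.factorial (s + 2 * k + 1)) := rfl

lemma Fc_zero_right (x : ℕ) : Fc x 0 = 1 := by
  cases x with
  | zero => rfl
  | succ s =>
    rw [Fc_succ]
    have h1 : s + 3 * 0 = s := by omega
    have h2 : s + 2 * 0 + 1 = s + 1 := by omega
    rw [h1, h2, Nat.factorial_succ]
    have := Nat.factorial_pos s
    field_simp
    push_cast [Nat.factorial_zero]; ring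

lemma Fc_nonneg (x k : ℕ) : 0 ≤ Fc x k := by
  cases x with
  | zero => cases k with
    | zero => norm_num [Fc]
    | succ k => simp [Fc]
  | succ s =>
    rw [Fc_succ]
    positivity

lemma Fc_pos (s k : ℕ) : 0 < Fc (s + 1) k := by
  rw [Fc_succ]
  have h1 := Nat.factorial_pos (s + 3 * k)
  have h2 := Nat.factorial_pos k
  have h3 := Nat.factorial_pos (s + 2 * k + 1)
  positivity

lemma fact_cast_succ (n : ℕ) :
    (Nat.factorial (n + 1) : ℝ) = (n + 1) * Nat.factorial n := by
  rw [Nat.factorial_succ]; push_cast; ring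

lemma Fc_pascal (s k : ℕ) : Fc (s + 1) (k + 1) = Fc s (k + 1) + Fc (s + 3) k := by
  cases s with
  | zero =>
    show Fc 1 (k+1) = 0 + Fc 3 k
    rw [Fc_succ, Fc_succ, zero_add]
    have e1 : 3 * (k + 1) = (3 * k + 2) + 1 := by omega
    have e2 : 0 + 2 * (k + 1) + 1 = 2 * k + 3 := by omega
    have e3 : 2 + 3 * k = 3 * k + 2 := by omega
    have e4 : 2 + 2 * k + 1 = 2 * k + 3 := by omega
    rw [e1, e2, e3, e4, fact_cast_succ, Nat.factorial_succ k]
    have h1 := Nat.factorial_pos (3 * k + 2)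
    have h2 := Nat.factorial_pos k
    have h3 := Nat.factorial_pos (2 * k + 3)
    have c1 : (0:ℝ) < (Nat.factorial (3*k+2) : ℝ) := by exact_mod_cast h1
    have c2 : (0:ℝ) < (Nat.factorial k : ℝ) := by exact_mod_cast h2
    have c3 : (0:ℝ) < (Nat.factorial (2*k+3) : ℝ) := by exact_mod_cast h3
    push_cast
    field_simp
    ring
  | succ s =>
    rw [Fc_succ, Fc_succ, Fc_succ]
    have e1 : s + 1 + 3 * (k + 1) = (s + 3 * k + 3) + 1 := by omega
    have e2 : s + 1 + 2 * (k + 1) + 1 = (s + 2 * k + 3) + 1 := by omega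
    have e3 : s + 3 * (k + 1) = s + 3 * k + 3 := by omega
    have e4 : s + 2 * (k + 1) + 1 = s + 2 * k + 3 := by omega
    have e5 : s + 3 + 3 * k = s + 3 * k + 3 := by omega
    have e6 : s + 3 + 2 * k + 1 = (s + 2 * k + 3) + 1 := by omega
    rw [e1, e2, e3, e4, e5, e6, fact_cast_succ (s + 3 * k + 3), fact_cast_succ (s + 2 * k + 3),
      Nat.factorial_succ k]
    have c1 : (0:ℝ) < (Nat.factorial (s + 3*k+3) : ℝ) := by exact_mod_cast Nat.factorial_pos _
    have c2 : (0:ℝ) < (Nat.factorial k : ℝ) := by exact_mod_cast Nat.factorial_pos _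
    have c3 : (0:ℝ) < (Nat.factorial (s + 2*k+3) : ℝ) := by exact_mod_cast Nat.factorial_pos _
    push_cast
    field_simp
    ring

lemma Fc_conv : ∀ k x y : ℕ, (∑ j ∈ range (k + 1), Fc x j * Fc y (k - j)) = Fc (x + y) k := by
  intro k
  induction k using Nat.strong_induction_on with
  | _ k ih =>
    intro x y
    induction y with
    | zero =>
      rw [Nat.add_zero]
      rw [Finset.sum_eq_single k]
      · simp [Nat.sub_self, Fc_zero_right]
      · intro j hj hjk
        have hjlt : j < k := by
          have := Finset.mem_range.mp hj; omega
        have : k - j = (k - j - 1) + 1 := by omega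
        rw [this]
        show Fc x j * Fc 0 _ = 0
        simp [Fc]
      · intro h; exact absurd (Finset.self_mem_range_succ k) h
    | succ y' ihy =>
      cases k with
      | zero => simp [Fc_zero_right]
      | succ k' =>
        have hsplit : (∑ j ∈ range (k' + 1 + 1), Fc x j * Fc (y' + 1) (k' + 1 - j)) =
            (∑ j ∈ range (k' + 1), Fc x j * Fc (y' + 1) (k' + 1 - j))
              + Fc x (k' + 1) * Fc (y' + 1) 0 := by
          rw [Finset.sum_range_succ, Nat.sub_self]
        rw [hsplit]
        have hterm : ∀ j ∈ range (k' + 1), Fc x j * Fc (y' + 1) (k' + 1 - j) =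
            Fc x j * Fc y' (k' + 1 - j) + Fc x j * Fc (y' + 3) (k' - j) := by
          intro j hj
          have hjk : j ≤ k' := by have := Finset.mem_range.mp hj; omega
          have h1 : k' + 1 - j = (k' - j) + 1 := by omega
          rw [h1, Fc_pascal, mul_add]
        rw [Finset.sum_congr rfl hterm, Finset.sum_add_distrib]
        have hA : (∑ j ∈ range (k' + 1 + 1), Fc x j * Fc y' (k' + 1 - j)) =
            (∑ j ∈ range (k' + 1), Fc x j * Fc y' (k' + 1 - j)) + Fc x (k' + 1) * Fc y' 0 := by
          simpa using Finset.sum_range_succ (fun j => Fc x j * Fc y' (k' + 1 - j)) (k' + 1)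
        have hB : (∑ j ∈ range (k' + 1), Fc x j * Fc (y' + 3) (k' - j)) = Fc (x + (y' + 3)) k' :=
          ih k' (by omega) x (y' + 3)
        calc (∑ j ∈ range (k' + 1), Fc x j * Fc y' (k' + 1 - j))
              + (∑ j ∈ range (k' + 1), Fc x j * Fc (y' + 3) (k' - j))
              + Fc x (k' + 1) * Fc (y' + 1) 0
            = (∑ j ∈ range (k' + 1 + 1), Fc x j * Fc y' (k' + 1 - j)) + Fc (x + (y' + 3)) k' := by
              rw [hB, hA, Fc_zero_right, Fc_zero_right]; ring
          _ = Fc (x + y') (k' + 1) + Fc (x + y' + 3) k' := by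
              rw [ihy]; ring_nf
          _ = Fc (x + (y' + 1)) (k' + 1) := by
              have : x + (y' + 1) = (x + y') + 1 := by omega
              rw [this, Fc_pascal]

lemma ratio_tendsto : Tendsto (fun k : ℕ =>
    ((3*(k:ℝ)+1)*(3*(k:ℝ)+2)*(3*(k:ℝ)+3))/(((k:ℝ)+1)*(2*(k:ℝ)+2)*(2*(k:ℝ)+3)))
    atTop (𝓝 (27/4)) := by
  have l : ∀ c : ℝ, Tendsto (fun k : ℕ => c/(k:ℝ)) atTop (𝓝 0) :=
    fun c => tendsto_const_div_atTop_nhds_zero_nat c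
  have l1 : Tendsto (fun k : ℕ => 3+1/(k:ℝ)) atTop (𝓝 3) := by
    simpa using tendsto_const_nhds.add (l 1)
  have l2 : Tendsto (fun k : ℕ => 3+2/(k:ℝ)) atTop (𝓝 3) := by
    simpa using tendsto_const_nhds.add (l 2)
  have l3 : Tendsto (fun k : ℕ => 3+3/(k:ℝ)) atTop (𝓝 3) := by
    simpa using tendsto_const_nhds.add (l 3)
  have l4 : Tendsto (fun k : ℕ => 1+1/(k:ℝ)) atTop (𝓝 1) := by
    simpa using tendsto_const_nhds.add (l 1)
  have l5 : Tendsto (fun k : ℕ => 2+2/(k:ℝ)) atTop (𝓝 2) := by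
    simpa using tendsto_const_nhds.add (l 2)
  have l6 : Tendsto (fun k : ℕ => 2+3/(k:ℝ)) atTop (𝓝 2) := by
    simpa using tendsto_const_nhds.add (l 3)
  have hnum : Tendsto (fun k : ℕ => (3+1/(k:ℝ))*(3+2/(k:ℝ))*(3+3/(k:ℝ))) atTop (𝓝 (3*3*3)) :=
    (l1.mul l2).mul l3
  have hden : Tendsto (fun k : ℕ => (1+1/(k:ℝ))*(2+2/(k:ℝ))*(2+3/(k:ℝ))) atTop (𝓝 (1*2*2)) :=
    (l4.mul l5).mul l6
  have key := hnum.div hden (by norm_num)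
  have hval : ((3*3*3)/(1*2*2) : ℝ) = 27/4 := by norm_num
  rw [hval] at key
  apply key.congr'
  filter_upwards [eventually_ge_atTop 1] with k hk
  have hk' : (0:ℝ) < (k:ℝ) := by exact_mod_cast Nat.pos_of_ne_zero (by omega)
  simp only [Pi.div_apply]
  field_simp

lemma Fc_one (k : ℕ) : Fc 1 k =
    (Nat.factorial (3*k) : ℝ)/(Nat.factorial k * Nat.factorial (2*k+1)) := by
  have := Fc_succ 0 k
  simpa using this

lemma summable_Fc_one {t : ℝ} (h0 : 0 ≤ t) (h4 : t < 4/27) :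
    Summable (fun k : ℕ => Fc 1 k * t^k) := by
  rcases eq_or_lt_of_le h0 with h | ht
  · apply summable_of_ne_finset_zero (s := {0})
    intro k hk
    have : k ≠ 0 := by simpa using hk
    rw [← h, zero_pow this, mul_zero]
  · apply summable_of_ratio_test_tendsto_lt_one (l := 27/4*t)
    · nlinarith
    · filter_upwards with k
      have h1 : 0 < Fc 1 k := by simpa using Fc_pos 0 k
      positivity
    · have hfun : (fun k : ℕ => ‖Fc 1 (k+1) * t^(k+1)‖/‖Fc 1 k * t^k‖) = fun k : ℕ =>
          (((3*(k:ℝ)+1)*(3*(k:ℝ)+2)*(3*(k:ℝ)+3))/(((k:ℝ)+1)*(2*(k:ℝ)+2)*(2*(k:ℝ)+3))) * t := by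
        funext (k : ℕ)
        have h1 : 0 < Fc 1 k := by simpa using Fc_pos 0 k
        have h2 : 0 < Fc 1 (k+1) := by simpa using Fc_pos 0 (k+1)
        rw [Real.norm_of_nonneg (by positivity), Real.norm_of_nonneg (by positivity)]
        rw [Fc_one, Fc_one]
        have f1 : (Nat.factorial (3*(k+1)) : ℝ) =
            (3*(k:ℝ)+3)*((3*(k:ℝ)+2)*((3*(k:ℝ)+1)* Nat.factorial (3*k))) := by
          rw [show 3*(k+1) = 3*k+1+1+1 by omega]
          push_cast [Nat.factorial_succ]
          ring
        have f2 : (Nat.factorial (k+1) : ℝ) = ((k:ℝ)+1) * Nat.factorial k := fact_cast_succ k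
        have f3 : (Nat.factorial (2*(k+1)+1) : ℝ) =
            (2*(k:ℝ)+3)*((2*(k:ℝ)+2)* Nat.factorial (2*k+1)) := by
          rw [show 2*(k+1)+1 = 2*k+1+1+1 by omega]
          push_cast [Nat.factorial_succ]
          ring
        rw [f1, f2, f3]
        have c1 : (0:ℝ) < (Nat.factorial (3*k) : ℝ) := by exact_mod_cast Nat.factorial_pos _
        have c2 : (0:ℝ) < (Nat.factorial k : ℝ) := by exact_mod_cast Nat.factorial_pos _
        have c3 : (0:ℝ) < (Nat.factorial (2*k+1) : ℝ) := by exact_mod_cast Nat.factorial_pos _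
        have hkk : (0:ℝ) < (k:ℝ)+1 := by positivity
        have htk : (0:ℝ) < t^k := pow_pos ht k
        field_simp
        ring
      rw [hfun]
      exact ratio_tendsto.mul_const t

lemma hasSum_Fc_pow {t : ℝ} (h0 : 0 ≤ t) (h4 : t < 4/27) (r : ℕ) :
    HasSum (fun k : ℕ => Fc (r+1) k * t^k) ((∑' k : ℕ, Fc 1 k * t^k)^(r+1)) := by
  induction r with
  | zero => simpa using (summable_Fc_one h0 h4).hasSum
  | succ r ihr =>
    have hf := summable_Fc_one h0 h4
    have hg := ihr.summable
    have hfn : Summable (fun k : ℕ => ‖Fc 1 k * t^k‖) := by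
      have : (fun k : ℕ => ‖Fc 1 k * t^k‖) = fun k => Fc 1 k * t^k := by
        funext k
        exact Real.norm_of_nonneg (mul_nonneg (Fc_nonneg _ _) (pow_nonneg h0 _))
      rw [this]; exact hf
    have hgn : Summable (fun k : ℕ => ‖Fc (r+1) k * t^k‖) := by
      have : (fun k : ℕ => ‖Fc (r+1) k * t^k‖) = fun k => Fc (r+1) k * t^k := by
        funext k
        exact Real.norm_of_nonneg (mul_nonneg (Fc_nonneg _ _) (pow_nonneg h0 _))
      rw [this]; exact hg
    have H := hasSum_sum_range_mul_of_summable_norm hfn hgn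
    have hfun : ∀ n : ℕ, (∑ k ∈ range (n+1), (Fc 1 k * t^k) * (Fc (r+1) (n-k) * t^(n-k)))
        = Fc (r+2) n * t^n := by
      intro n
      have step : ∀ k ∈ range (n+1), (Fc 1 k * t^k) * (Fc (r+1) (n-k) * t^(n-k))
          = (Fc 1 k * Fc (r+1) (n-k)) * t^n := by
        intro k hk
        have hkn : k ≤ n := by have := Finset.mem_range.mp hk; omega
        have : t^k * t^(n-k) = t^n := by
          rw [← pow_add]
          congr 1
          omega
        calc (Fc 1 k * t^k) * (Fc (r+1) (n-k) * t^(n-k))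
            = (Fc 1 k * Fc (r+1) (n-k)) * (t^k * t^(n-k)) := by ring
          _ = (Fc 1 k * Fc (r+1) (n-k)) * t^n := by rw [this]
      rw [Finset.sum_congr rfl step, ← Finset.sum_mul, Fc_conv,
        show 1+(r+1) = r+2 by omega]
    rw [ihr.tsum_eq] at H
    have heq : (fun n : ℕ => ∑ k ∈ range (n+1), (Fc 1 k * t^k) * (Fc (r+1) (n-k) * t^(n-k)))
        = fun n : ℕ => Fc (r+2) n * t^n := funext hfun
    rw [heq] at H
    convert H using 1
    · rfl
    rw [pow_succ]
    ring

lemma Fc_cubic {t : ℝ} (h0 : 0 ≤ t) (h4 : t < 4/27) :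
    (∑' k : ℕ, Fc 1 k * t^k) = 1 + t * (∑' k : ℕ, Fc 1 k * t^k)^3 := by
  have h1 := summable_Fc_one h0 h4
  conv_lhs => rw [Summable.tsum_eq_zero_add h1]
  have hz : Fc 1 0 * t^0 = 1 := by rw [Fc_zero_right, pow_zero, mul_one]
  rw [hz]
  congr 1
  have hshift : (fun k : ℕ => Fc 1 (k+1) * t^(k+1)) = fun k : ℕ => t * (Fc 3 k * t^k) := by
    funext k
    have : Fc 1 (k+1) = Fc 3 k := by
      have := Fc_pascal 0 k
      simpa [Fc] using this
    rw [this, pow_succ]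
    ring
  rw [hshift, tsum_mul_left, (hasSum_Fc_pow h0 h4 2).tsum_eq]

lemma G_zero : (∑' k : ℕ, Fc 1 k * (0:ℝ)^k) = 1 := by
  rw [tsum_eq_single 0]
  · rw [Fc_zero_right, pow_zero, mul_one]
  · intro k hk
    rw [zero_pow hk, mul_zero]

lemma W_eq {α : ℝ} (h23 : 2/3 < α) (h1 : α ≤ 1) :
    (∑' k : ℕ, Fc 1 k * (α^2*(1-α))^k) * α = 1 := by
  set c0 : ℝ := α^2*(1-α) with hc0def
  have hα0 : (0:ℝ) < α := by linarith
  have hc00 : 0 ≤ c0 := by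
    have : 0 ≤ 1 - α := by linarith
    positivity
  have hc04 : c0 < 4/27 := by
    nlinarith [mul_pos (mul_pos (by linarith : (0:ℝ) < 3*α-2) (by linarith : (0:ℝ) < 3*α-2))
      (by linarith : (0:ℝ) < 3*α+1)]
  -- the map β ↦ β^2 (1-β) sends [α,1] into [0,c0]
  have hmaps : ∀ β ∈ Set.Icc α 1, β^2*(1-β) ∈ Set.Icc 0 c0 := by
    rintro β ⟨hβ1, hβ2⟩
    constructor
    · have : 0 ≤ 1 - β := by linarith
      positivity
    · nlinarith [sq_nonneg (β - α), sq_nonneg (β + α), mul_nonneg (by linarith : (0:ℝ) ≤ β - α)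
        (by nlinarith : (0:ℝ) ≤ α^2 + α*β + β^2 - α - β)]
  set G : ℝ → ℝ := fun t => ∑' k : ℕ, Fc 1 k * t^k with hGdef
  have hGcont : ContinuousOn G (Set.Icc 0 c0) := by
    apply continuousOn_tsum (u := fun k : ℕ => Fc 1 k * c0^k)
    · intro k
      exact (continuous_const.mul (continuous_pow k)).continuousOn
    · exact summable_Fc_one hc00 hc04
    · rintro k x ⟨hx0, hx1⟩
      rw [Real.norm_of_nonneg (mul_nonneg (Fc_nonneg _ _) (pow_nonneg hx0 _))]
      exact mul_le_mul_of_nonneg_left (pow_le_pow_left₀ hx0 hx1 k) (Fc_nonneg _ _)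
  set W : ℝ → ℝ := fun β => G (β^2*(1-β)) with hWdef
  have hWcont : ContinuousOn W (Set.Icc α 1) := by
    apply hGcont.comp
    · exact Continuous.continuousOn (by continuity)
    · exact hmaps
  have hcubic : ∀ β ∈ Set.Icc α 1, W β = 1 + (β^2*(1-β)) * (W β)^3 := by
    intro β hβ
    have h := hmaps β hβ
    exact Fc_cubic h.1 (lt_of_le_of_lt h.2 hc04)
  -- the two closed pieces
  set A : Set ℝ := Set.Icc α 1 ∩ (fun β => β * W β - 1) ⁻¹' {0} with hAdef
  set B : Set ℝ := Set.Icc α 1 ∩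
      (fun β => β*(1-β)*(W β)^2 + (1-β)*(W β) - 1) ⁻¹' {0} with hBdef
  have hAclosed : IsClosed A :=
    ContinuousOn.preimage_isClosed_of_isClosed
      ((continuousOn_id.mul hWcont).sub continuousOn_const) isClosed_Icc isClosed_singleton
  have hBclosed : IsClosed B := by
    apply ContinuousOn.preimage_isClosed_of_isClosed _ isClosed_Icc isClosed_singleton
    apply ContinuousOn.sub _ continuousOn_const
    exact ((continuousOn_id.mul (continuousOn_const.sub continuousOn_id)).mul
      (hWcont.pow 2)).add ((continuousOn_const.sub continuousOn_id).mul hWcont)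
  have hcover : Set.Icc α 1 ⊆ A ∪ B := by
    intro β hβ
    have hc := hcubic β hβ
    have hz : (β * W β - 1) * (β*(1-β)*(W β)^2 + (1-β)*(W β) - 1) = 0 := by
      linear_combination -hc
    rcases mul_eq_zero.mp hz with h | h
    · left; exact ⟨hβ, h⟩
    · right; exact ⟨hβ, h⟩
  have hdisj : ∀ β, β ∈ A → β ∈ B → False := by
    rintro β ⟨⟨hβ1, hβ2⟩, hfA⟩ ⟨_, hfB⟩
    simp only [Set.mem_preimage, Set.mem_singleton_iff] at hfA hfB
    have h23' : (2:ℝ) - 3*β = 0 := by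
      linear_combination β*hfB - (1-β)*(β*(W β)+2)*hfA
    linarith
  have h1A : (1:ℝ) ∈ A := by
    refine ⟨⟨h1, le_refl 1⟩, ?_⟩
    simp only [Set.mem_preimage, Set.mem_singleton_iff]
    have e : (1:ℝ)^2*(1-1) = 0 := by norm_num
    have hW1 : W 1 = 1 := by
      show G ((1:ℝ)^2*(1-1)) = 1
      rw [e, hGdef]
      exact G_zero
    rw [hW1]
    ring
  have hαIcc : α ∈ Set.Icc α 1 := ⟨le_refl α, h1⟩
  rcases hcover hαIcc with hA | hB
  · have := hA.2
    simp only [Set.mem_preimage, Set.mem_singleton_iff] at this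
    have : α * W α = 1 := by linarith
    calc (∑' k : ℕ, Fc 1 k * (α^2*(1-α))^k) * α = α * W α := by rw [mul_comm]
      _ = 1 := this
  · exfalso
    obtain ⟨z, hzIcc, hzA, hzB⟩ :=
      (isPreconnected_closed_iff.mp isPreconnected_Icc) A B hAclosed hBclosed hcover
        ⟨1, ⟨h1, le_refl 1⟩, h1A⟩ ⟨α, hαIcc, hB⟩
    exact hdisj z hzA hzB

theorem supercritical_pik_sums_to_pi
    (α : ℝ) (hα0 : 2 / 3 < α) (hα1 : α < 1) (i : ℕ) (hi : 1 ≤ i) :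
    HasSum
      (fun k : ℕ =>
        2 * phi k (i + 1) * α ^ (i + 2 * k) * ((1 - α) / 2) ^ (i + k))
      (2 / 4 ^ i *
        ((Nat.factorial (2 * i - 2) : ℝ) /
          ((Nat.factorial (i - 1) : ℝ) * (Nat.factorial (i + 1) : ℝ))) *
        (2 / α - 2) ^ i * ((3 * α - 2) * (i : ℝ) + 1)) := by
  obtain ⟨j, rfl⟩ : ∃ j, i = j + 1 := ⟨i - 1, by omega⟩
  have hαpos : (0:ℝ) < α := by linarith
  have h1α : (0:ℝ) < 1 - α := by linarith
  set t : ℝ := α^2*(1-α) with ht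
  have ht0 : 0 ≤ t := by positivity
  have ht4 : t < 4/27 := by
    nlinarith [mul_pos (mul_pos (by linarith : (0:ℝ) < 3*α-2) (by linarith : (0:ℝ) < 3*α-2))
      (by linarith : (0:ℝ) < 3*α+1)]
  have hW : (∑' k : ℕ, Fc 1 k * t^k) = α⁻¹ := by
    have h := W_eq hα0 (le_of_lt hα1)
    rw [← ht] at h
    field_simp at h ⊢
    linarith
  have h1 : HasSum (fun k : ℕ => Fc (2*j+1) k * t^k) (α⁻¹^(2*j+1)) := by
    have := hasSum_Fc_pow ht0 ht4 (2*j)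
    rwa [hW] at this
  have h2 : HasSum (fun k : ℕ => Fc (2*j+2) k * t^k) (α⁻¹^(2*j+2)) := by
    have := hasSum_Fc_pow ht0 ht4 (2*j+1)
    rwa [hW, show 2*j+1+1 = 2*j+2 by omega] at this
  set D : ℝ := 4 * (Nat.factorial (2*j+1) : ℝ) / ((Nat.factorial j : ℝ))^2
      * (α*(1-α)/2)^(j+1) with hD
  set c1 : ℝ := 3*D/((2*(j:ℝ)+4)*(2*(j:ℝ)+1)) with hc1
  set c2 : ℝ := -2*D/((2*(j:ℝ)+4)*(2*(j:ℝ)+2)) with hc2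
  have hsum := (h1.mul_left c1).add (h2.mul_left c2)
  convert hsum using 1
  · rfl
  · funext k
    show 2 * phi k (j+1+1) * α ^ (j+1 + 2*k) * ((1 - α) / 2) ^ (j+1+k)
      = c1 * (Fc (2*j+1) k * t^k) + c2 * (Fc (2*j+2) k * t^k)
    have n1 : (Nat.factorial j : ℝ) ≠ 0 := by
      exact_mod_cast (Nat.factorial_pos j).ne'
    have n2 : (Nat.factorial k : ℝ) ≠ 0 := by
      exact_mod_cast (Nat.factorial_pos k).ne'
    have n3 : (Nat.factorial (2*j+3*k) : ℝ) ≠ 0 := by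
      exact_mod_cast (Nat.factorial_pos _).ne'
    have n4 : (Nat.factorial (2*j+2*k+1) : ℝ) ≠ 0 := by
      exact_mod_cast (Nat.factorial_pos _).ne'
    have d1 : (2*(j:ℝ)+4) ≠ 0 := by positivity
    have d2 : (2*(j:ℝ)+1) ≠ 0 := by positivity
    have d3 : (2*(j:ℝ)+2) ≠ 0 := by positivity
    have d4 : (2*(j:ℝ)+2*(k:ℝ)+2) ≠ 0 := by positivity
    have fA : (Nat.factorial (2*j+2*k+2) : ℝ)
        = (2*(j:ℝ)+2*(k:ℝ)+2) * (Nat.factorial (2*j+2*k+1) : ℝ) := by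
      rw [show 2*j+2*k+2 = (2*j+2*k+1)+1 by omega, fact_cast_succ]
      push_cast; ring
    have fB : (Nat.factorial (2*j+1+3*k) : ℝ)
        = (2*(j:ℝ)+3*(k:ℝ)+1) * (Nat.factorial (2*j+3*k) : ℝ) := by
      rw [show 2*j+1+3*k = (2*j+3*k)+1 by omega, fact_cast_succ]
      push_cast; ring
    have stepA : 2 * phi k (j+1+1) * α ^ (j+1 + 2*k) * ((1 - α) / 2) ^ (j+1+k)
        = D * ((Nat.factorial (2*j+3*k) : ℝ) /
            ((Nat.factorial k : ℝ) * ((2*(j:ℝ)+2*(k:ℝ)+2) * (Nat.factorial (2*j+2*k+1) : ℝ))))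
            * t^k := by
      rw [phi]
      have m2 : (j+1+1) - 2 = j := by omega
      rw [m2, fA, hD, ht]
      rw [show (α*(1-α)/2)^(j+1) = α^(j+1)*(1-α)^(j+1)/2^(j+1) by rw [div_pow, mul_pow],
        show (α^2*(1-α))^k = α^(2*k)*(1-α)^k by rw [mul_pow, ← pow_mul],
        show ((1-α)/2)^(j+1+k) = (1-α)^(j+1+k)/2^(j+1+k) from div_pow _ _ _]
      have p2 : (2:ℝ)^(j+1) ≠ 0 := by positivity
      have p3 : (2:ℝ)^(j+1+k) ≠ 0 := by positivity
      field_simp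
      ring
    rw [stepA]
    rw [show (2*j+1 : ℕ) = (2*j)+1 from rfl, Fc_succ,
      show (2*j+2 : ℕ) = (2*j+1)+1 from rfl, Fc_succ,
      show (2*j+1+2*k+1 : ℕ) = 2*j+2*k+2 by omega, fA, fB]
    push_cast
    have hT : (0:ℝ) ≤ t^k := pow_nonneg ht0 k
    generalize t^k = T at *
    generalize hGG : (Nat.factorial (2*j+3*k) : ℝ) = G at *
    generalize hKK : (Nat.factorial k : ℝ) = K at *
    generalize hMM : (Nat.factorial (2*j+2*k+1) : ℝ) = M at *
    have stepB : D = c1*(2*(j:ℝ)+1)*(2*(j:ℝ)+2*(k:ℝ)+2) + c2*(2*(j:ℝ)+2)*(2*(j:ℝ)+3*(k:ℝ)+1) := by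
      rw [hc1, hc2]
      field_simp
      ring
    rw [stepB]
    field_simp
    ring
  · rw [hc1, hc2, hD]
    have m1 : 2*(j+1) - 2 = 2*j := by omega
    have m2 : (j+1) - 1 = j := by omega
    rw [m1, m2, show (j+1)+1 = j+2 from rfl]
    have f1 : (Nat.factorial (2*j+1) : ℝ) = (2*(j:ℝ)+1) * (Nat.factorial (2*j) : ℝ) := by
      rw [show 2*j+1 = (2*j)+1 from rfl, fact_cast_succ]; push_cast; ring
    have f2 : (Nat.factorial (j+2) : ℝ) = ((j:ℝ)+2)*((j:ℝ)+1) * (Nat.factorial j : ℝ) := by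
      rw [show j+2 = (j+1)+1 from rfl, fact_cast_succ, fact_cast_succ]; push_cast; ring
    rw [f1, f2]
    have hb : 2/α - 2 = 2*(1-α)/α := by field_simp
    have h4 : (4:ℝ)^(j+1) = 2^(j+1) * 2^(j+1) := by
      rw [show (4:ℝ) = 2*2 by norm_num, mul_pow]
    rw [hb, h4]
    rw [show (α*(1-α)/2)^(j+1) = α^(j+1)*(1-α)^(j+1)/2^(j+1) by rw [div_pow, mul_pow],
      show (2*(1-α)/α)^(j+1) = 2^(j+1)*(1-α)^(j+1)/α^(j+1) by rw [div_pow, mul_pow],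
      inv_pow, inv_pow]
    have p2 : (2:ℝ)^(j+1) ≠ 0 := by positivity
    have p4 : α^(j+1) ≠ 0 := by positivity
    have p5 : α^(2*j+1) ≠ 0 := by positivity
    have p6 : α^(2*j+2) ≠ 0 := by positivity
    have n1 : (Nat.factorial j : ℝ) ≠ 0 := by
      exact_mod_cast (Nat.factorial_pos j).ne'
    have n6 : (Nat.factorial (2*j) : ℝ) ≠ 0 := by
      exact_mod_cast (Nat.factorial_pos _).ne'
    have d1 : (2*(j:ℝ)+4) ≠ 0 := by positivity
    have d2 : (2*(j:ℝ)+1) ≠ 0 := by positivity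
    have d3 : (2*(j:ℝ)+2) ≠ 0 := by positivity
    have d5 : ((j:ℝ)+2) ≠ 0 := by positivity
    have d6 : ((j:ℝ)+1) ≠ 0 := by positivity
    push_cast
    field_simp
    ring
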